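/- Under the hypotheses of the local convergence theorem (H Hilbert, Ω ⊆ H open, F : Ω → H continuously Fréchet differentiable, T maximal monotone, x* ∈ Ω with 0 ∈ F(x*) + T(x*), F'(x*) positive-semidefinite, F̂'(x*) := (F'(x*)+F'(x*)*)/2 boundedly invertible, and f : [0, R) → ℝ a majorant function for F at x* on B(x*, κ) — f twice continuously differentiable, f(0) = 0, f'(0) = −1, f' convex and strictly increasing, ‖F̂'(x*)⁻¹‖·‖F'(x) − F'(x* + τ(x − x*))‖ ≤ f'(‖x − x*‖) − f'(τ‖x − x*‖) for all τ ∈ [0,1], x ∈ B(x*, κ), κ := sup{t ∈ [0,R): B(x*,t) ⊂ Ω}, ν := sup{t : f'(t) < 0}, ρ := sup{t ∈ (0,ν) : f(t)/(t f'(t)) − 1 < 1}, r := min{κ, ρ}): for x₀ ∈ B(x*, r) \ {x*} and {x_k} a Newton sequence (0 ∈ F(x_k) + F'(x_k)(x_{k+1}−x_k) + T(x_{k+1}) for all k), with t₀ := ‖x*−x₀‖ and t_{k+1} := |t_k − f(t_k)/f'(t_k)|, one has ‖x* − x_k‖ ≤ t₀ · (t₁/t₀)^{2^k − 1} for all k ≥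 0. -/

import Mathlib

open RealInnerProductSpace Filter Metric Set

/-- A set-valued operator `T : H ⇉ H` is monotone if `⟨u - v, y - x⟩ ≥ 0` whenever
`u ∈ T y` and `v ∈ T x`; it is maximal monotone if moreover every pair `(x, u)` that is
monotonically related to the graph of `T` belongs to the graph of `T`. -/
def IsMaximalMonotone {H : Type*} [NormedAddCommGroup H] [InnerProductSpace ℝ H]
    (T : H → Set H) : Prop :=
  (∀ x y u v : H, u ∈ T y → v ∈ T x → 0 ≤ ⟪u - v, y - x⟫) ∧
  (∀ x u : H, (∀ y v : H, v ∈ T y → 0 ≤ ⟪u - v, x - y⟫) → u ∈ T x)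



lemma aux_cs {H : Type*} [NormedAddCommGroup H] [InnerProductSpace ℝ H]
    (A : H →L[ℝ] H) (hsymm : ∀ a b : H, ⟪A a, b⟫ = ⟪a, A b⟫)
    (hpsd : ∀ a : H, 0 ≤ ⟪A a, a⟫) (a b : H) :
    ⟪A a, b⟫ ^ 2 ≤ ⟪A a, a⟫ * ⟪A b, b⟫ := by
  have key : ∀ θ : ℝ, 0 ≤ ⟪A a, a⟫ * (θ * θ) + (2 * ⟪A a, b⟫) * θ + ⟪A b, b⟫ := by
    intro θ
    have h := hpsd (θ • a + b)
    have hab : ⟪A b, a⟫ = ⟪A a, b⟫ := by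
      rw [hsymm b a, real_inner_comm]
    rw [map_add, map_smul] at h
    simp only [inner_add_left, inner_add_right, inner_smul_left, inner_smul_right,
      RCLike.conj_to_real] at h
    rw [hab] at h
    nlinarith [h]
  have := discrim_le_zero key
  rw [discrim] at this
  nlinarith [this]

lemma aux_coercive {H : Type*} [NormedAddCommGroup H] [InnerProductSpace ℝ H]
    (A G : H →L[ℝ] H) (hsymm : ∀ a b : H, ⟪A a, b⟫ = ⟪a, A b⟫)
    (hpsd : ∀ a : H, 0 ≤ ⟪A a, a⟫)
    (hGA : ∀ u : H, A (G u) = u) (u : H) :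
    ‖u‖ ^ 2 ≤ ‖G‖ * ⟪A u, u⟫ := by
  have hcs := aux_cs A hsymm hpsd (G u) u
  have h1 : ⟪A (G u), u⟫ = ‖u‖ ^ 2 := by rw [hGA, real_inner_self_eq_norm_sq]
  have h2 : ⟪A (G u), G u⟫ ≤ ‖G‖ * ‖u‖ ^ 2 := by
    calc ⟪A (G u), G u⟫ = ⟪u, G u⟫ := by rw [hGA]
    _ ≤ ‖u‖ * ‖G u‖ := real_inner_le_norm u (G u)
    _ ≤ ‖u‖ * (‖G‖ * ‖u‖) := by
        have := G.le_opNorm u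
        have : ‖G u‖ ≤ ‖G‖ * ‖u‖ := this
        nlinarith [norm_nonneg u]
    _ = ‖G‖ * ‖u‖ ^ 2 := by ring
  rcases eq_or_ne u 0 with h | h
  · simp [h]
  · have hu0 : 0 < ‖u‖ := norm_pos_iff.mpr h
    have hu : 0 < ‖u‖ ^ 2 := by positivity
    have hr : 0 ≤ ⟪A u, u⟫ := hpsd u
    rw [h1] at hcs
    nlinarith [hcs, h2, hr]


lemma aux_taylor {H : Type*} [NormedAddCommGroup H] [InnerProductSpace ℝ H]
    (Ω : Set H) (F : H → H) (F' : H → H →L[ℝ] H)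
    (hFd : ∀ x ∈ Ω, HasFDerivAt F (F' x) x)
    (xs : H) (κ R β : ℝ) (hβ : 0 < β) (hκR : κ ≤ R)
    (hball : Metric.ball xs κ ⊆ Ω)
    (f f' : ℝ → ℝ) (hf0 : f 0 = 0)
    (hfd1 : ∀ t ∈ Set.Ico (0:ℝ) R, HasDerivWithinAt f (f' t) (Set.Ico (0:ℝ) R) t)
    (hmaj : ∀ τ ∈ Set.Icc (0:ℝ) 1, ∀ x ∈ Metric.ball xs κ,
      β * ‖F' x - F' (xs + τ • (x - xs))‖ ≤ f' ‖x - xs‖ - f' (τ * ‖x - xs‖))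
    (y : H) (hy : ‖y - xs‖ < κ) :
    ‖F xs - F y - F' y (xs - y)‖ ≤ (1/β) * (‖y - xs‖ * f' ‖y - xs‖ - f ‖y - xs‖) := by
  set a : ℝ := ‖y - xs‖ with ha
  have ha0 : 0 ≤ a := norm_nonneg _
  rcases eq_or_lt_of_le ha0 with h0 | hapos
  · -- a = 0 : y = xs
    have hyxs : y = xs := by
      have : y - xs = 0 := norm_eq_zero.mp h0.symm
      rwa [sub_eq_zero] at this
    subst hyxs
    simp [← ha, ← h0, hf0]
  have haR : a < R := lt_of_lt_of_le hy hκR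
  have hymem : y ∈ Metric.ball xs κ := by rwa [mem_ball, dist_eq_norm]
  set v : H := xs - y with hv
  have hva : ‖v‖ = a := by rw [hv, ha, norm_sub_rev]
  set g : ℝ → H := fun σ => F (y + σ • v) - F y - σ • (F' y v) with hg
  have hpath : ∀ σ : ℝ, y + σ • v - xs = (1 - σ) • (y - xs) := by
    intro σ; rw [hv]; module
  have hpΩ : ∀ σ ∈ Icc (0:ℝ) 1, y + σ • v ∈ Ω := by
    intro σ hσ
    apply hball
    rw [mem_ball, dist_eq_norm, hpath, norm_smul, Real.norm_eq_abs,
      abs_of_nonneg (by linarith [hσ.2] : (0:ℝ) ≤ 1 - σ)]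
    calc (1 - σ) * a ≤ 1 * a := by
          apply mul_le_mul_of_nonneg_right _ ha0; linarith [hσ.1]
    _ = a := one_mul a
    _ < κ := hy
  have hgd : ∀ σ ∈ Icc (0:ℝ) 1, HasDerivAt g ((F' (y + σ • v) - F' y) v) σ := by
    intro σ hσ
    have hp : HasDerivAt (fun σ' : ℝ => y + σ' • v) v σ := by
      have := ((hasDerivAt_id σ).smul_const v).const_add y
      simpa using this
    have hFp := (hFd _ (hpΩ σ hσ)).comp_hasDerivAt σ hp
    have hlin : HasDerivAt (fun σ' : ℝ => σ' • (F' y v)) (F' y v) σ := by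
      have := (hasDerivAt_id σ).smul_const (F' y v)
      simpa using this
    have := (hFp.sub_const (F y)).sub hlin
    rw [ContinuousLinearMap.sub_apply]; exact this
  set B : ℝ → ℝ := fun σ => (1/β) * (σ * (a * f' a) + f ((1 - σ) * a) - f a) with hB
  have hfD : ∀ s ∈ Ioo (0:ℝ) R, HasDerivAt f (f' s) s := by
    intro s hs
    exact (hfd1 s ⟨hs.1.le, hs.2⟩).hasDerivAt (Ico_mem_nhds hs.1 hs.2)
  have hBd : ∀ σ ∈ Ico (0:ℝ) 1,
      HasDerivAt B ((1/β) * (a * f' a - a * f' ((1 - σ) * a))) σ := by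
    intro σ hσ
    have hs0 : 0 < (1 - σ) * a := by
      apply mul_pos _ hapos; linarith [hσ.2]
    have hsR : (1 - σ) * a < R := by
      apply lt_of_le_of_lt _ haR
      calc (1 - σ) * a ≤ 1 * a := by
            apply mul_le_mul_of_nonneg_right _ ha0; linarith [hσ.1]
      _ = a := one_mul a
    have hinner : HasDerivAt (fun σ' : ℝ => (1 - σ') * a) (-a) σ := by
      have := ((hasDerivAt_id σ).const_sub 1).mul_const a
      simpa using this
    have hcomp : HasDerivAt (fun σ' : ℝ => f ((1 - σ') * a)) (f' ((1 - σ) * a) * (-a)) σ :=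
      (hfD _ ⟨hs0, hsR⟩).comp σ hinner
    have h1 : HasDerivAt (fun σ' : ℝ => σ' * (a * f' a)) (a * f' a) σ := by
      have := (hasDerivAt_id σ).mul_const (a * f' a)
      simpa using this
    have := ((h1.add hcomp).sub_const (f a)).const_mul (1/β)
    exact this.congr_deriv (by ring)
  have hfcont : ContinuousOn f (Ico (0:ℝ) R) := fun t ht => (hfd1 t ht).continuousWithinAt
  have hBc : ContinuousOn B (Icc (0:ℝ) 1) := by
    apply ContinuousOn.mul continuousOn_const
    apply ContinuousOn.sub
    apply ContinuousOn.add
    · exact (continuous_id.mul continuous_const).continuousOn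
    · apply hfcont.comp ((continuous_const.sub continuous_id).mul continuous_const).continuousOn
      intro σ hσ
      show (1 - σ) * a ∈ Ico 0 R
      constructor
      · exact mul_nonneg (by linarith [hσ.2]) ha0
      · apply lt_of_le_of_lt _ haR
        calc (1 - σ) * a ≤ 1 * a := by
              apply mul_le_mul_of_nonneg_right _ ha0; linarith [hσ.1]
        _ = a := one_mul a
    · exact continuousOn_const
  have hbound : ∀ σ ∈ Ico (0:ℝ) 1,
      ‖(F' (y + σ • v) - F' y) v‖ ≤ (1/β) * (a * f' a - a * f' ((1 - σ) * a)) := by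
    intro σ hσ
    have hpeq : xs + (1 - σ) • (y - xs) = y + σ • v := by rw [hv]; module
    have hm := hmaj (1 - σ) ⟨by linarith [hσ.2], by linarith [hσ.1]⟩ y hymem
    rw [hpeq, ← ha] at hm
    calc ‖(F' (y + σ • v) - F' y) v‖
        ≤ ‖F' (y + σ • v) - F' y‖ * ‖v‖ := ContinuousLinearMap.le_opNorm _ _
    _ = ‖F' y - F' (y + σ • v)‖ * a := by rw [norm_sub_rev, hva]
    _ ≤ ((f' a - f' ((1 - σ) * a)) / β) * a := by
        apply mul_le_mul_of_nonneg_right _ ha0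
        rw [le_div_iff₀ hβ]
        linarith [hm]
    _ = (1/β) * (a * f' a - a * f' ((1 - σ) * a)) := by ring
  have key := image_norm_le_of_norm_deriv_right_le_deriv_boundary'
    (f := g) (f' := fun σ => (F' (y + σ • v) - F' y) v) (a := (0:ℝ)) (b := 1)
    (fun σ hσ => (hgd σ hσ).continuousAt.continuousWithinAt)
    (fun σ hσ => ((hgd σ (Ico_subset_Icc_self hσ)).hasDerivWithinAt))
    (B := B) (B' := fun σ => (1/β) * (a * f' a - a * f' ((1 - σ) * a)))
    (by simp [hg, hB]) hBc
    (fun σ hσ => (hBd σ hσ).hasDerivWithinAt)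
    hbound
  have h1 := key (right_mem_Icc.mpr zero_le_one)
  have hg1 : g 1 = F xs - F y - F' y (xs - y) := by
    simp [hg, hv]
  have hB1 : B 1 = (1/β) * (a * f' a - f a) := by
    simp [hB, hf0]
  rw [hg1, hB1] at h1
  exact h1

section Scalar

section Scalar
variable {R ν : ℝ} {f f' f'' : ℝ → ℝ}
  (hfd1 : ∀ t ∈ Set.Ico (0:ℝ) R, HasDerivWithinAt f (f' t) (Set.Ico (0:ℝ) R) t)
  (hfd2 : ∀ t ∈ Set.Ico (0:ℝ) R, HasDerivWithinAt f' (f'' t) (Set.Ico (0:ℝ) R) t)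
  (hf0 : f 0 = 0) (hf'0 : f' 0 = -1)
  (hfconv : ConvexOn ℝ (Set.Ico (0:ℝ) R) f')
  (hfmono : StrictMonoOn f' (Set.Ico (0:ℝ) R))
  (hνR : ν ≤ R)
  (hf'neg : ∀ t, 0 ≤ t → t < ν → f' t < 0)

include hfd1 in
lemma sc_fD : ∀ t ∈ Ioo (0:ℝ) R, HasDerivAt f (f' t) t := fun t ht =>
  (hfd1 t ⟨ht.1.le, ht.2⟩).hasDerivAt (Ico_mem_nhds ht.1 ht.2)

include hfd2 in
lemma sc_f'D : ∀ t ∈ Ioo (0:ℝ) R, HasDerivAt f' (f'' t) t := fun t ht =>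
  (hfd2 t ⟨ht.1.le, ht.2⟩).hasDerivAt (Ico_mem_nhds ht.1 ht.2)

include hfd1 hf0 hfmono in
lemma sc_fle : ∀ t, 0 ≤ t → t < R → f t ≤ t * f' t := by
  intro t ht0 htR
  rcases eq_or_lt_of_le ht0 with h | h
  · rw [← h, hf0]; norm_num
  · have hcont : ContinuousOn f (Icc 0 t) := by
      apply ContinuousOn.mono (fun s hs => (hfd1 s hs).continuousWithinAt)
      exact Icc_subset_Ico_right htR |>.trans (by intro s hs; exact ⟨hs.1, hs.2⟩)
    obtain ⟨c, hc, hceq⟩ := exists_hasDerivAt_eq_slope f f' h hcont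
      (fun s hs => sc_fD hfd1 s ⟨hs.1, hs.2.trans htR⟩)
    have hcle : f' c < f' t := hfmono ⟨hc.1.le, hc.2.trans htR⟩ ⟨ht0, htR⟩ hc.2
    have : f t = t * f' c := by
      rw [hceq]; field_simp [hf0]; rw [hf0]; ring
    rw [this]
    exact mul_le_mul_of_nonneg_left hcle.le ht0
  
include hfd2 hfconv in
lemma sc_slope : ∀ s x : ℝ, 0 ≤ s → s < x → x < R → f' x - f' s ≤ f'' x * (x - s) := by
  intro s x hs0 hsx hxR
  have hsl := hfconv.slope_le_of_hasDerivWithinAt (x := s) (y := x)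
    ⟨hs0, hsx.trans hxR⟩ ⟨(hs0.trans hsx.le), hxR⟩ hsx (hfd2 x ⟨hs0.trans hsx.le, hxR⟩)
  rw [slope_def_field] at hsl
  have hd : 0 < x - s := by linarith
  calc f' x - f' s = ((f' x - f' s) / (x - s)) * (x - s) := by field_simp
  _ ≤ f'' x * (x - s) := by
      exact mul_le_mul_of_nonneg_right hsl hd.le

include hfd2 hfconv hfmono in
lemma sc_f''nonneg : ∀ x ∈ Ioo (0:ℝ) R, 0 ≤ f'' x := by
  intro x hx
  have h := sc_slope hfd2 hfconv (x/2) x (by linarith [hx.1]) (by linarith [hx.1]) hx.2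
  have h2 : f' (x/2) < f' x := hfmono ⟨by linarith [hx.1], by linarith [hx.2, hx.1]⟩
    ⟨hx.1.le, hx.2⟩ (by linarith [hx.1])
  nlinarith [hx.1]

omit hfmono in
include hfd1 hfd2 hf0 hfconv in
lemma sc_convslope : ∀ x, 0 < x → x < R → x * f' x - f x ≤ x^2 * f'' x / 2 := by
  intro x hx0 hxR
  set W : ℝ → ℝ := fun s => f' x * s - f s - f'' x * (x * s - s^2/2) with hW
  have hWd : ∀ s ∈ Ioo (0:ℝ) x, HasDerivAt W (f' x - f' s - f'' x * (x - s)) s := by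
    intro s hs
    have h1 : HasDerivAt (fun s : ℝ => f' x * s) (f' x) s := by
      simpa using (hasDerivAt_id s).const_mul (f' x)
    have h2 := sc_fD hfd1 s ⟨hs.1, hs.2.trans hxR⟩
    have h3 : HasDerivAt (fun s : ℝ => f'' x * (x * s - s^2/2)) (f'' x * (x - s)) s := by
      have ha : HasDerivAt (fun s : ℝ => x * s - s^2/2) (x - s) s := by
        have hb : HasDerivAt (fun s : ℝ => x * s) x s := by
          simpa using (hasDerivAt_id s).const_mul x
        have hc : HasDerivAt (fun s : ℝ => s^2/2) s s := by
          have := ((hasDerivAt_pow 2 s).div_const 2)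
          norm_num at this
          simpa using this
        exact hb.sub hc
      exact ha.const_mul (f'' x)
    exact (h1.sub h2).sub h3
  have hant : AntitoneOn W (Icc 0 x) := by
    apply antitoneOn_of_deriv_nonpos (convex_Icc 0 x)
    · apply ContinuousOn.sub
      apply ContinuousOn.sub
      · exact (continuous_const.mul continuous_id).continuousOn
      · apply ContinuousOn.mono (fun s hs => (hfd1 s hs).continuousWithinAt)
        intro s hs; exact ⟨hs.1, lt_of_le_of_lt hs.2 hxR⟩
      · exact (continuous_const.mul ((continuous_const.mul continuous_id).sub
          ((continuous_pow 2).div_const 2))).continuousOn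
    · intro s hs
      rw [interior_Icc] at hs
      exact ((hWd s hs).differentiableAt).differentiableWithinAt
    · intro s hs
      rw [interior_Icc] at hs
      rw [(hWd s hs).deriv]
      have := sc_slope hfd2 hfconv s x hs.1.le hs.2 hxR
      linarith
  have hWx := hant ⟨le_refl 0, hx0.le⟩ ⟨hx0.le, le_refl x⟩ hx0.le
  have hW0 : W 0 = 0 := by simp [hW, hf0]
  have hWxv : W x = f' x * x - f x - f'' x * (x^2/2) := by
    simp only [hW]; ring_nf
  rw [hW0, hWxv] at hWx
  nlinarith [hWx]

-- (assumed available): sc_fD sc_f'D sc_fle sc_slope sc_f''nonneg sc_convslope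
include hfd1 hf0 hfmono hνR hf'neg in
lemma sc_phi_nonneg : ∀ t, 0 ≤ t → t < ν → 0 ≤ f t / f' t - t := by
  intro t ht0 htν
  have h1 := sc_fle hfd1 hf0 hfmono t ht0 (lt_of_lt_of_le htν hνR)
  have h2 := hf'neg t ht0 htν
  have := (le_div_iff_of_neg h2).mpr h1
  linarith

include hfd1 hfd2 hf0 hfconv hfmono hνR hf'neg in
lemma sc_phimono : ∀ s t, 0 ≤ s → s ≤ t → t < ν →
    f s / f' s - s ≤ f t / f' t - t := by
  intro s t hs0 hst htν
  have htR : t < R := lt_of_lt_of_le htν hνR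
  have hmem : ∀ x ∈ Icc (0:ℝ) t, x ∈ Ico (0:ℝ) R :=
    fun x hx => ⟨hx.1, lt_of_le_of_lt hx.2 htR⟩
  have hne : ∀ x ∈ Icc (0:ℝ) t, f' x ≠ 0 :=
    fun x hx => (hf'neg x hx.1 (lt_of_le_of_lt hx.2 htν)).ne
  have hD : ∀ x ∈ Ioo (0:ℝ) t, HasDerivAt (fun u => f u / f' u - u)
      ((f' x * f' x - f x * f'' x) / (f' x)^2 - 1) x := by
    intro x hx
    have h1 := sc_fD hfd1 x ⟨hx.1, hx.2.trans htR⟩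
    have h2 := sc_f'D hfd2 x ⟨hx.1, hx.2.trans htR⟩
    have h3 := (h1.div h2 (hne x ⟨hx.1.le, hx.2.le⟩)).sub (hasDerivAt_id x)
    exact h3
  have hmon : MonotoneOn (fun u => f u / f' u - u) (Icc 0 t) := by
    apply monotoneOn_of_deriv_nonneg (convex_Icc 0 t)
    · apply ContinuousOn.sub
      · apply ContinuousOn.div
        · exact (ContinuousOn.mono (fun u hu => (hfd1 u hu).continuousWithinAt) hmem)
        · exact (ContinuousOn.mono (fun u hu => (hfd2 u hu).continuousWithinAt) hmem)
        · exact hne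
      · exact continuousOn_id
    · intro x hx
      rw [interior_Icc] at hx
      exact ((hD x hx).differentiableAt).differentiableWithinAt
    · intro x hx
      rw [interior_Icc] at hx
      rw [(hD x hx).deriv]
      have hfx : f x ≤ 0 := by
        have h1 := sc_fle hfd1 hf0 hfmono x hx.1.le (hx.2.trans htR)
        have h2 := hf'neg x hx.1.le (hx.2.trans htν)
        nlinarith [hx.1]
      have hq := sc_f''nonneg hfd2 hfconv hfmono x ⟨hx.1, hx.2.trans htR⟩
      have hp := hf'neg x hx.1.le (hx.2.trans htν)
      have hpne : f' x ≠ 0 := ne_of_lt hp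
      have heq : (f' x * f' x - f x * f'' x) / (f' x)^2 - 1
          = (-(f x) * f'' x) / (f' x)^2 := by
        field_simp
        ring
      rw [heq]
      apply div_nonneg _ (sq_nonneg _)
      exact mul_nonneg (by linarith) hq
  rcases eq_or_lt_of_le hst with h | h
  · rw [h]
  · exact hmon ⟨hs0, hst⟩ ⟨hs0.trans hst, le_refl t⟩ hst

include hfd1 hfd2 hf0 hfconv hfmono hνR hf'neg in
lemma sc_hmono : ∀ s t, 0 < s → s ≤ t → t < ν →
    (f s / f' s - s) / s^2 ≤ (f t / f' t - t) / t^2 := by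
  intro s t hs0 hst htν
  have htR : t < R := lt_of_lt_of_le htν hνR
  have hne : ∀ x ∈ Icc s t, f' x ≠ 0 :=
    fun x hx => (hf'neg x (hs0.le.trans hx.1) (lt_of_le_of_lt hx.2 htν)).ne
  have hmem : ∀ x ∈ Icc s t, x ∈ Ico (0:ℝ) R :=
    fun x hx => ⟨hs0.le.trans hx.1, lt_of_le_of_lt hx.2 htR⟩
  have hD : ∀ x ∈ Ioo s t, HasDerivAt (fun u => (f u / f' u - u) / u^2)
      ((((f' x * f' x - f x * f'' x) / (f' x)^2 - 1) * x^2
        - (f x / f' x - x) * (2 * x)) / (x^2)^2) x := by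
    intro x hx
    have hx0 : 0 < x := hs0.trans hx.1
    have h1 := sc_fD hfd1 x ⟨hx0, hx.2.trans htR⟩
    have h2 := sc_f'D hfd2 x ⟨hx0, hx.2.trans htR⟩
    have h3 := (h1.div h2 (hne x ⟨hx.1.le, hx.2.le⟩)).sub (hasDerivAt_id x)
    have h4 : HasDerivAt (fun u : ℝ => u^2) (2 * x) x := by
      simpa [mul_comm] using hasDerivAt_pow 2 x
    have h5 := HasDerivAt.div (c := fun u => f u / f' u - u) (d := fun u : ℝ => u^2)
      (by exact h3) h4 (by positivity)
    exact h5
  have hmon : MonotoneOn (fun u => (f u / f' u - u) / u^2) (Icc s t) := by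
    apply monotoneOn_of_deriv_nonneg (convex_Icc s t)
    · apply ContinuousOn.div
      · apply ContinuousOn.sub
        · apply ContinuousOn.div
          · exact (ContinuousOn.mono (fun u hu => (hfd1 u hu).continuousWithinAt) hmem)
          · exact (ContinuousOn.mono (fun u hu => (hfd2 u hu).continuousWithinAt) hmem)
          · exact hne
        · exact continuousOn_id
      · exact (continuous_pow 2).continuousOn
      · intro x hx
        have : 0 < x := hs0.trans_le hx.1
        positivity
    · intro x hx
      rw [interior_Icc] at hx
      exact ((hD x hx).differentiableAt).differentiableWithinAt
    · intro x hx
      rw [interior_Icc] at hx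
      rw [(hD x hx).deriv]
      have hx0 : 0 < x := hs0.trans hx.1
      have hxR : x < R := hx.2.trans htR
      have hxν : x < ν := hx.2.trans htν
      have hA0 : 0 ≤ x * f' x - f x := by
        have := sc_fle hfd1 hf0 hfmono x hx0.le hxR
        linarith
      have hA1 : x * f' x - f x ≤ x^2 * f'' x / 2 :=
        sc_convslope hfd1 hfd2 hf0 hfconv x hx0 hxR
      have hp : f' x < 0 := hf'neg x hx0.le hxν
      have hq : 0 ≤ f'' x := sc_f''nonneg hfd2 hfconv hfmono x ⟨hx0, hxR⟩
      have hM : 0 ≤ 2*x*(f' x)^2 - 2*(f x)*(f' x) - x*(f x)*(f'' x) := by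
        rcases le_or_gt 0 (2 * f' x + x * f'' x) with h | h
        · nlinarith [mul_nonneg hA0 h, mul_nonneg (mul_nonneg hx0.le hx0.le) (mul_nonneg hq (neg_nonneg.mpr hp.le))]
        · nlinarith [mul_nonneg (sub_nonneg.mpr hA1) (neg_nonneg.mpr h.le),
            mul_nonneg (mul_nonneg (mul_nonneg hx0.le hx0.le) hx0.le) (mul_nonneg hq hq)]
      have heq : (((f' x * f' x - f x * f'' x) / (f' x)^2 - 1) * x^2
          - (f x / f' x - x) * (2 * x)) / (x^2)^2
          = ((2*x*(f' x)^2 - 2*(f x)*(f' x) - x*(f x)*(f'' x)) * x) / ((f' x)^2 * x^4) := by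
        have hpne : f' x ≠ 0 := ne_of_lt hp
        have hxne : x ≠ 0 := ne_of_gt hx0
        field_simp
        ring
      rw [heq]
      apply div_nonneg (mul_nonneg hM hx0.le)
      positivity
  rcases eq_or_lt_of_le hst with h | h
  · rw [h]
  · exact hmon ⟨le_refl s, hst⟩ ⟨hst, le_refl t⟩ hst


end Scalar

set_option maxHeartbeats 2000000 in
theorem newton_sequence_explicit_rate {H : Type*} [NormedAddCommGroup H] [InnerProductSpace ℝ H] [CompleteSpace H]
    (Ω : Set H) (hΩ : IsOpen Ω) (F : H → H) (F' : H → H →L[ℝ] H)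
    (hFd : ∀ x ∈ Ω, HasFDerivAt F (F' x) x) (hF'c : ContinuousOn F' Ω)
    (xs : H) (hxs : xs ∈ Ω)
    (T : H → Set H) (hT : IsMaximalMonotone T)
    (hsol : (0 : H) ∈ (fun w => F xs + w) '' T xs)
    (hpsd : ∀ y : H, 0 ≤ ⟪(F' xs) y, y⟫)
    (Ahat : H →L[ℝ] H)
    (hAhat : Ahat = (1 / 2 : ℝ) • (F' xs + ContinuousLinearMap.adjoint (F' xs)))
    (Ginv : H →L[ℝ] H)
    (hGinv1 : Ginv.comp Ahat = ContinuousLinearMap.id ℝ H)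
    (hGinv2 : Ahat.comp Ginv = ContinuousLinearMap.id ℝ H)
    (R : ℝ) (hR : 0 < R) (κ : ℝ)
    (hκ : κ = sSup {u : ℝ | u ∈ Set.Ico (0 : ℝ) R ∧ Metric.ball xs u ⊆ Ω})
    (f f' f'' : ℝ → ℝ)
    (hfd1 : ∀ t ∈ Set.Ico (0 : ℝ) R, HasDerivWithinAt f (f' t) (Set.Ico (0 : ℝ) R) t)
    (hfd2 : ∀ t ∈ Set.Ico (0 : ℝ) R, HasDerivWithinAt f' (f'' t) (Set.Ico (0 : ℝ) R) t)
    (hfc : ContinuousOn f'' (Set.Ico (0 : ℝ) R))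
    (hf0 : f 0 = 0) (hf'0 : f' 0 = -1)
    (hfconv : ConvexOn ℝ (Set.Ico (0 : ℝ) R) f')
    (hfmono : StrictMonoOn f' (Set.Ico (0 : ℝ) R))
    (hmaj : ∀ τ ∈ Set.Icc (0 : ℝ) 1, ∀ x ∈ Metric.ball xs κ,
      ‖Ginv‖ * ‖F' x - F' (xs + τ • (x - xs))‖ ≤ f' ‖x - xs‖ - f' (τ * ‖x - xs‖))
    (ν : ℝ) (hν : ν = sSup {u : ℝ | u ∈ Set.Ico (0 : ℝ) R ∧ f' u < 0})
    (ρ : ℝ) (hρ : ρ = sSup {u : ℝ | u ∈ Set.Ioo (0 : ℝ) ν ∧ f u / (u * f' u) - 1 < 1})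
    (r : ℝ) (hr : r = min κ ρ)
    (xseq : ℕ → H) (hx0 : xseq 0 ∈ Metric.ball xs r) (hx0ne : xseq 0 ≠ xs)
    (hNewton : ∀ k : ℕ, (0 : H) ∈
      (fun w => F (xseq k) + (F' (xseq k)) (xseq (k + 1) - xseq k) + w) '' T (xseq (k + 1)))
    (tseq : ℕ → ℝ) (ht0 : tseq 0 = ‖xs - xseq 0‖)
    (htk : ∀ k : ℕ, tseq (k + 1) = |tseq k - f (tseq k) / f' (tseq k)|)
    :
    ∀ k : ℕ, ‖xs - xseq k‖ ≤ tseq 0 * (tseq 1 / tseq 0) ^ (2 ^ k - 1) := by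


  classical
  -- ===== basic setup =====
  set β := ‖Ginv‖ with hβdef
  have hx0sub : xseq 0 - xs ≠ 0 := sub_ne_zero.mpr hx0ne
  have hGAv : ∀ u : H, Ahat (Ginv u) = u := by
    intro u
    have := ContinuousLinearMap.ext_iff.mp hGinv2 u
    simpa using this
  have hGAv' : ∀ u : H, Ginv (Ahat u) = u := by
    intro u
    have := ContinuousLinearMap.ext_iff.mp hGinv1 u
    simpa using this
  have hβpos : 0 < β := by
    rcases eq_or_lt_of_le (norm_nonneg Ginv) with h | h
    · exfalso
      have hG0 : Ginv = 0 := by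
        rw [eq_comm, norm_eq_zero] at h; exact h
      have := hGAv' (xseq 0 - xs)
      rw [hG0] at this
      simp at this
      exact hx0sub this.symm
    · exact h
  have hsymm : ∀ a b : H, ⟪Ahat a, b⟫ = ⟪a, Ahat b⟫ := by
    intro a b
    rw [hAhat]
    simp only [ContinuousLinearMap.coe_smul', Pi.smul_apply, ContinuousLinearMap.add_apply]
    rw [real_inner_smul_left, real_inner_smul_right, inner_add_left, inner_add_right,
      ContinuousLinearMap.adjoint_inner_left, ContinuousLinearMap.adjoint_inner_right]
    ring_nf
  have hAeq : ∀ a : H, ⟪Ahat a, a⟫ = ⟪(F' xs) a, a⟫ := by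
    intro a
    rw [hAhat]
    simp only [ContinuousLinearMap.coe_smul', Pi.smul_apply, ContinuousLinearMap.add_apply]
    rw [real_inner_smul_left, inner_add_left, ContinuousLinearMap.adjoint_inner_left,
      real_inner_comm a (F' xs a)]
    ring
  have coercive : ∀ u : H, ‖u‖ ^ 2 ≤ β * ⟪(F' xs) u, u⟫ := by
    intro u
    have := aux_coercive Ahat Ginv hsymm (fun a => by rw [hAeq]; exact hpsd a) hGAv u
    rwa [hAeq] at this
  -- ===== radius facts =====
  have hSκne : Set.Nonempty {u : ℝ | u ∈ Set.Ico (0:ℝ) R ∧ Metric.ball xs u ⊆ Ω} :=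
    ⟨0, ⟨le_refl 0, hR⟩, by simp⟩
  have hκR : κ ≤ R := by
    rw [hκ]; exact csSup_le hSκne (fun u hu => hu.1.2.le)
  have hballκ : Metric.ball xs κ ⊆ Ω := by
    intro y hy
    rw [mem_ball] at hy
    rw [hκ] at hy
    obtain ⟨u, huS, hu⟩ := exists_lt_of_lt_csSup hSκne hy
    exact huS.2 (mem_ball.mpr hu)
  have hrd : dist (xseq 0) xs < r := mem_ball.mp hx0
  have hrκ : r ≤ κ := hr ▸ min_le_left _ _
  have hrρ : r ≤ ρ := hr ▸ min_le_right _ _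
  have ht0pos : 0 < tseq 0 := by
    rw [ht0]; exact norm_pos_iff.mpr (sub_ne_zero.mpr (fun h => hx0ne h.symm))
  have ht0r : tseq 0 < r := by
    rw [ht0, norm_sub_rev, ← dist_eq_norm]; exact hrd
  have ht0κ : tseq 0 < κ := lt_of_lt_of_le ht0r hrκ
  have ht0ρ : tseq 0 < ρ := lt_of_lt_of_le ht0r hrρ
  have hSνne : Set.Nonempty {u : ℝ | u ∈ Set.Ico (0:ℝ) R ∧ f' u < 0} :=
    ⟨0, ⟨le_refl 0, hR⟩, by rw [hf'0]; norm_num⟩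
  have hνR : ν ≤ R := by
    rw [hν]; exact csSup_le hSνne (fun u hu => hu.1.2.le)
  have hf'neg : ∀ t, 0 ≤ t → t < ν → f' t < 0 := by
    intro t ht0' htν
    rw [hν] at htν
    obtain ⟨s, hsS, hts⟩ := exists_lt_of_lt_csSup hSνne htν
    have : f' t < f' s := hfmono ⟨ht0', hts.trans hsS.1.2⟩ hsS.1 hts
    linarith [hsS.2]
  have hSρne : Set.Nonempty {u : ℝ | u ∈ Set.Ioo (0:ℝ) ν ∧ f u / (u * f' u) - 1 < 1} := by
    by_contra hne
    rw [Set.not_nonempty_iff_eq_empty] at hne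
    rw [hne, Real.sSup_empty] at hρ
    linarith [ht0pos, ht0ρ, hρ]
  have hρν : ρ ≤ ν := by
    rw [hρ]; exact csSup_le hSρne (fun u hu => hu.1.2.le)
  have ht0ν : tseq 0 < ν := lt_of_lt_of_le ht0ρ hρν
  -- ===== step lemma =====
  have step : ∀ k : ℕ, ‖xseq k - xs‖ < κ → ‖xseq k - xs‖ < ν →
      ‖xseq (k+1) - xs‖ ≤ f ‖xseq k - xs‖ / f' ‖xseq k - xs‖ - ‖xseq k - xs‖ := by
    intro k hκk hνk
    obtain ⟨w, hwT, hweq⟩ := hNewton k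
    obtain ⟨w0, hw0T, hw0eq⟩ := hsol
    simp only at hweq hw0eq
    have hw : w = -(F (xseq k) + (F' (xseq k)) (xseq (k+1) - xseq k)) :=
      eq_neg_of_add_eq_zero_right hweq
    have hw0 : w0 = -(F xs) := eq_neg_of_add_eq_zero_right hw0eq
    have hmono := hT.1 xs (xseq (k+1)) w w0 hwT hw0T
    rw [hw, hw0] at hmono
    set y := xseq k with hy
    set z := xseq (k+1) with hz
    set a : ℝ := ‖y - xs‖ with ha
    set u : H := z - xs with hu
    set E : H := F xs - F y - F' y (xs - y) with hE
    have hkey : ⟪(F' y) u, u⟫ ≤ ⟪E, u⟫ := by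
      have hzy : z - y = u + (xs - y) := by rw [hu]; abel
      have hsplit : -(F y + (F' y) (z - y)) - -(F xs) = E - (F' y) u := by
        rw [hzy, map_add, hE]; abel
      rw [hsplit, inner_sub_left] at hmono
      linarith
    have hdiff : ⟪(F' xs - F' y) u, u⟫ ≤ ‖F' y - F' xs‖ * ‖u‖^2 := by
      calc ⟪(F' xs - F' y) u, u⟫ ≤ ‖(F' xs - F' y) u‖ * ‖u‖ := real_inner_le_norm _ _
      _ ≤ (‖F' xs - F' y‖ * ‖u‖) * ‖u‖ :=
          mul_le_mul_of_nonneg_right (ContinuousLinearMap.le_opNorm _ _) (norm_nonneg _)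
      _ = ‖F' y - F' xs‖ * ‖u‖^2 := by rw [norm_sub_rev]; ring
    have hymem : y ∈ Metric.ball xs κ := by rw [mem_ball, dist_eq_norm]; exact hκk
    have hmaj0 := hmaj 0 ⟨le_refl 0, zero_le_one⟩ y hymem
    simp only [zero_smul, add_zero, zero_mul, hf'0] at hmaj0
    -- hmaj0 : β * ‖F' y - F' xs‖ ≤ f' ‖y - xs‖ - -1
    have hEb := aux_taylor Ω F F' hFd xs κ R β hβpos hκR hballκ f f' hf0 hfd1
      (fun τ hτ x hx => hmaj τ hτ x hx) y hκk
    have hfa : f' a < 0 := hf'neg a (norm_nonneg _) hνk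
    have hEu : ⟪E, u⟫ ≤ (1/β) * (a * f' a - f a) * ‖u‖ := by
      calc ⟪E, u⟫ ≤ ‖E‖ * ‖u‖ := real_inner_le_norm _ _
      _ ≤ (1/β) * (a * f' a - f a) * ‖u‖ :=
          mul_le_mul_of_nonneg_right hEb (norm_nonneg _)
    have hcomb : (-(f' a)) * ‖u‖^2 ≤ (a * f' a - f a) * ‖u‖ := by
      have h1 : ‖u‖^2 ≤ β * ⟪(F' xs) u, u⟫ := coercive u
      set X : ℝ := ⟪(F' y) u, u⟫ with hXd
      set Y : ℝ := ⟪(F' xs - F' y) u, u⟫ with hYd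
      set Z : ℝ := ⟪(F' xs) u, u⟫ with hZd
      set W : ℝ := ⟪E, u⟫ with hWd
      set n : ℝ := ‖u‖ with hnd
      set c : ℝ := ‖F' y - F' xs‖ with hcd
      have h2 : β * ⟪(F' xs) u, u⟫ = β * ⟪(F' y) u, u⟫ + β * ⟪(F' xs - F' y) u, u⟫ := by
        rw [ContinuousLinearMap.sub_apply, inner_sub_left]; ring
      have e1 : β * ⟪(F' y) u, u⟫ ≤ β * ⟪E, u⟫ := mul_le_mul_of_nonneg_left hkey hβpos.le
      have e2 : β * ⟪E, u⟫ ≤ (a * f' a - f a) * ‖u‖ := by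
        calc β * ⟪E, u⟫ ≤ β * ((1/β) * (a * f' a - f a) * ‖u‖) :=
            mul_le_mul_of_nonneg_left hEu hβpos.le
        _ = (a * f' a - f a) * ‖u‖ := by field_simp
      have e3 : β * ⟪(F' xs - F' y) u, u⟫ ≤ f' a * ‖u‖^2 + ‖u‖^2 := by
        have d1 : β * ⟪(F' xs - F' y) u, u⟫ ≤ β * (‖F' y - F' xs‖ * ‖u‖^2) :=
          mul_le_mul_of_nonneg_left hdiff hβpos.le
        have d2 : β * ‖F' y - F' xs‖ ≤ f' a + 1 := by linarith [hmaj0]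
        nlinarith [mul_nonneg (sub_nonneg.mpr d2) (sq_nonneg ‖u‖), d1, sq_nonneg ‖u‖]
      nlinarith [h1, h2, e1, e2, e3]
    rcases eq_or_lt_of_le (norm_nonneg u) with h0 | h0
    · have : ‖z - xs‖ = 0 := h0.symm
      rw [this]
      have h1 := sc_fle hfd1 hf0 hfmono a (norm_nonneg _) (lt_of_lt_of_le hνk hνR)
      have := (le_div_iff_of_neg hfa).mpr h1
      linarith
    · have hdiv : ‖u‖ ≤ (a * f' a - f a) / (-(f' a)) := by
        rw [le_div_iff₀ (by linarith : (0:ℝ) < -(f' a))]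
        nlinarith [hcomb, h0]
      calc ‖z - xs‖ = ‖u‖ := by rw [hu]
      _ ≤ (a * f' a - f a) / (-(f' a)) := hdiv
      _ = f a / f' a - a := by
          have hne : f' a ≠ 0 := ne_of_lt hfa
          rw [div_neg, ← neg_div, neg_sub, sub_div, mul_div_assoc, div_self hne, mul_one]
  -- ===== абs formula for tseq =====
  have habs : ∀ t, 0 ≤ t → t < ν → |t - f t / f' t| = f t / f' t - t := by
    intro t h0 hν'
    have := sc_phi_nonneg hfd1 hf0 hfmono hνR hf'neg t h0 hν'
    rw [abs_of_nonpos (by linarith)]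
    ring
  have htknn : ∀ k, 0 ≤ tseq k := by
    intro k
    cases k with
    | zero => exact ht0pos.le
    | succ n => rw [htk n]; exact abs_nonneg _
  set d : ℝ := tseq 1 / tseq 0 with hd
  have ht1 : tseq 1 = f (tseq 0) / f' (tseq 0) - tseq 0 := by
    rw [htk 0, habs _ ht0pos.le ht0ν]
  have hd0 : 0 ≤ d := div_nonneg (htknn 1) ht0pos.le
  have ht1lt : tseq 1 < tseq 0 := by
    rw [hρ] at ht0ρ
    obtain ⟨s, hsS, hs⟩ := exists_lt_of_lt_csSup hSρne ht0ρ
    have hs0 : 0 < s := hsS.1.1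
    have hsν : s < ν := hsS.1.2
    have hfs : f' s < 0 := hf'neg s hs0.le hsν
    have hφs' : f s / f' s - s < s := by
      have h2 := hsS.2
      rw [mul_comm, div_mul_eq_div_div] at h2
      have h3 : (f s / f' s - s) / s < 1 := by
        rw [sub_div, div_self (ne_of_gt hs0)]
        linarith
      rw [div_lt_one hs0] at h3
      exact h3
    have hh := sc_hmono hfd1 hfd2 hf0 hfconv hfmono hνR hf'neg (tseq 0) s ht0pos hs.le hsν
    have hh' : (f (tseq 0) / f' (tseq 0) - tseq 0) * s^2 ≤ (f s / f' s - s) * (tseq 0)^2 := by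
      rw [div_le_div_iff₀ (by positivity) (by positivity)] at hh
      linarith
    have hφs0 : 0 ≤ f s / f' s - s := sc_phi_nonneg hfd1 hf0 hfmono hνR hf'neg s hs0.le hsν
    rw [ht1]
    have c1 : (f s / f' s - s) * (tseq 0)^2 < s * (tseq 0)^2 := by
      nlinarith [hφs', mul_pos ht0pos ht0pos]
    have c2 : s * (tseq 0)^2 < s^2 * tseq 0 := by
      nlinarith [hs, mul_pos hs0 ht0pos]
    nlinarith [hh', c1, c2, mul_pos hs0 hs0, ht0pos]
  have hd1 : d < 1 := by rw [hd, div_lt_one ht0pos]; exact ht1lt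
  have hquad : ∀ t, 0 < t → t ≤ tseq 0 →
      f t / f' t - t ≤ (tseq 1 / (tseq 0)^2) * t^2 := by
    intro t htp htle
    have hh := sc_hmono hfd1 hfd2 hf0 hfconv hfmono hνR hf'neg t (tseq 0) htp htle ht0ν
    rw [div_le_div_iff₀ (by positivity) (by positivity)] at hh
    rw [div_mul_eq_mul_div, le_div_iff₀ (by positivity)]
    rw [ht1]
    linarith
  -- ===== main induction =====
  have main : ∀ k, ‖xseq k - xs‖ ≤ tseq k ∧ tseq k ≤ tseq 0 * d ^ (2^k - 1) := by
    intro k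
    induction k with
    | zero =>
      constructor
      · rw [ht0, norm_sub_rev]
      · simp
    | succ k ih =>
      obtain ⟨ih1, ih2⟩ := ih
      have hdpow : d ^ (2^k - 1) ≤ 1 := pow_le_one₀ hd0 hd1.le
      have htk0' : tseq k ≤ tseq 0 := by
        calc tseq k ≤ tseq 0 * d ^ (2^k-1) := ih2
        _ ≤ tseq 0 * 1 := mul_le_mul_of_nonneg_left hdpow ht0pos.le
        _ = tseq 0 := mul_one _
      have htkν : tseq k < ν := lt_of_le_of_lt htk0' ht0ν
      have hxk0 : ‖xseq k - xs‖ ≤ tseq k := ih1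
      have hstep := step k (lt_of_le_of_lt (hxk0.trans htk0') ht0κ)
        (lt_of_le_of_lt hxk0 htkν)
      have hφm := sc_phimono hfd1 hfd2 hf0 hfconv hfmono hνR hf'neg
        ‖xseq k - xs‖ (tseq k) (norm_nonneg _) hxk0 htkν
      have htk1 : tseq (k+1) = f (tseq k) / f' (tseq k) - tseq k := by
        rw [htk k, habs _ (htknn k) htkν]
      constructor
      · rw [htk1]; exact hstep.trans hφm
      · rw [htk1]
        rcases eq_or_lt_of_le (htknn k) with h0 | h0
        · rw [← h0, hf0, hf'0]
          norm_num
          positivity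
        · have hq := hquad (tseq k) h0 htk0'
          have hexp : 2^(k+1) - 1 = 2*(2^k - 1) + 1 := by
            have h1 : 1 ≤ 2^k := Nat.one_le_two_pow
            have h2 : 2^(k+1) = 2 * 2^k := by rw [pow_succ]; ring
            omega
          have ht1nn := htknn 1
          calc f (tseq k) / f' (tseq k) - tseq k ≤ (tseq 1 / (tseq 0)^2) * (tseq k)^2 := hq
          _ ≤ (tseq 1 / (tseq 0)^2) * (tseq 0 * d^(2^k-1))^2 := by
              apply mul_le_mul_of_nonneg_left _ (by positivity)
              exact pow_le_pow_left₀ (htknn k) ih2 2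
          _ = tseq 0 * d ^ (2^(k+1) - 1) := by
              rw [hexp, pow_add, pow_mul, pow_one, hd]
              field_simp
              ring
  intro k
  obtain ⟨h1, h2⟩ := main k
  calc ‖xs - xseq k‖ = ‖xseq k - xs‖ := norm_sub_rev _ _
  _ ≤ tseq k := h1
  _ ≤ tseq 0 * d ^ (2^k - 1) := h2
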